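/- Let k ≥ 2 be an integer, let T = (V,E) be a finite tree with |V| ≥ k, let Π be a connected k-partition of T, and let v ∈ V be a vertex that is not satisfied with respect to Π. Then there exists a connected k-partition Π' of T whose size tuple is lexicographically strictly larger than the size tuple of Π. -/

import Mathlib

set_option linter.unusedSectionVars false

section Helpers
variable {V : Type*} [Fintype V] [DecidableEq V] {G : SimpleGraph V}

/-- Reachability within a finite vertex set. -/
def RIn (G : SimpleGraph V) (S : Finset V) (x y : V) : Prop :=
  ∃ p : G.Walk x y, ∀ z ∈ p.support, z ∈ S

lemma RIn.refl {S : Finset V} {x : V} (hx : x ∈ S) : RIn G S x x :=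
  ⟨SimpleGraph.Walk.nil, by simp [hx]⟩

lemma RIn.symm {S : Finset V} {x y : V} (h : RIn G S x y) : RIn G S y x := by
  obtain ⟨p, hp⟩ := h
  exact ⟨p.reverse, by simpa using hp⟩

lemma RIn.trans {S : Finset V} {x y z : V} (h : RIn G S x y) (h' : RIn G S y z) :
    RIn G S x z := by
  obtain ⟨p, hp⟩ := h; obtain ⟨q, hq⟩ := h'
  refine ⟨p.append q, fun w hw => ?_⟩
  rw [SimpleGraph.Walk.mem_support_append_iff] at hw
  rcases hw with hw | hw
  · exact hp _ hw
  · exact hq _ hw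

lemma RIn.mono {S S' : Finset V} (hss : S ⊆ S') {x y : V} (h : RIn G S x y) :
    RIn G S' x y := by
  obtain ⟨p, hp⟩ := h; exact ⟨p, fun z hz => hss (hp z hz)⟩

lemma rin_of_adj {S : Finset V} {x y : V} (hx : x ∈ S) (hy : y ∈ S) (h : G.Adj x y) :
    RIn G S x y :=
  ⟨h.toWalk, by simp [hx, hy]⟩

lemma connected_induce_iff_rin (S : Finset V) :
    (G.induce (↑S : Set V)).Connected ↔ S.Nonempty ∧ ∀ x ∈ S, ∀ y ∈ S, RIn G S x y := by
  constructor
  · intro hconn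
    obtain ⟨⟨x0, hx0⟩⟩ := hconn.nonempty
    have hpre := hconn.preconnected
    refine ⟨⟨x0, hx0⟩, fun x hx y hy => ?_⟩
    obtain ⟨p⟩ := hpre ⟨x, hx⟩ ⟨y, hy⟩
    refine ⟨p.map (SimpleGraph.Embedding.induce (↑S : Set V)).toHom, fun z hz => ?_⟩
    erw [SimpleGraph.Walk.support_map, List.mem_map] at hz
    obtain ⟨⟨w, hw⟩, _, rfl⟩ := hz
    exact hw
  · rintro ⟨⟨x0, hx0⟩, hr⟩
    haveI : Nonempty (↑S : Set V) := ⟨⟨x0, hx0⟩⟩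
    apply SimpleGraph.Connected.mk
    · rintro ⟨x, hx⟩ ⟨y, hy⟩
      obtain ⟨p, hp⟩ := hr x hx y hy
      clear hr
      induction p with
      | nil => rfl
      | @cons a b c hab q ih =>
          have hb : b ∈ S := hp b (by simp)
          have ha : a ∈ S := hp a (by simp)
          have : (G.induce (↑S : Set V)).Adj ⟨a, ha⟩ ⟨b, hb⟩ := by
            simpa using hab
          exact (this.reachable).trans (ih hb hy (fun z hz => hp z (by simp [hz])))

/-- Peeling off the last edge of a path to `v` staying inside `S`. -/
lemma exists_nbr_walk {S : Finset V} {x v : V} (hx : x ∈ S) (hxv : x ≠ v)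
    (h : RIn G S x v) :
    ∃ w, G.Adj v w ∧ ∃ q : G.Walk x w, ∀ z ∈ q.support, z ∈ S.erase v := by
  obtain ⟨p, hp⟩ := h
  have hbsupp : ∀ z ∈ p.bypass.support, z ∈ S := fun z hz =>
    hp z (SimpleGraph.Walk.support_bypass_subset _ hz)
  have hbpath := p.bypass_isPath
  set r := p.bypass.reverse with hr
  have hrpath : r.IsPath := hbpath.reverse
  have hrsupp : ∀ z ∈ r.support, z ∈ S := by
    intro z hz
    rw [hr, SimpleGraph.Walk.support_reverse, List.mem_reverse] at hz
    exact hbsupp z hz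
  cases hre : r with
  | nil => exact absurd rfl hxv
  | @cons _ w _ hw q =>
      refine ⟨w, hw, q.reverse, fun z hz => ?_⟩
      rw [SimpleGraph.Walk.support_reverse, List.mem_reverse] at hz
      have hzS : z ∈ S := hrsupp z (by rw [hre]; simp [hz])
      have hnodup := hrpath.support_nodup
      rw [hre, SimpleGraph.Walk.support_cons] at hnodup
      have hvz : z ≠ v := by
        rintro rfl
        exact (List.nodup_cons.mp hnodup).1 hz
      exact Finset.mem_erase.mpr ⟨hvz, hzS⟩

end Helpers

lemma sorted_lex_of_counts (c : ℕ) :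
    ∀ (l1 l2 : List ℕ), l1.Pairwise (· ≤ ·) → l2.Pairwise (· ≤ ·) → l1.length = l2.length →
    (∀ b < c, l1.count b = l2.count b) → l2.count c < l1.count c →
    List.Lex (· < ·) l1 l2 := by
  intro l1
  induction l1 with
  | nil => intro l2 _ _ _ _ hc; simp at hc
  | cons h1 t1 ih =>
      intro l2 hs1 hs2 hlen hlow hc
      cases l2 with
      | nil => simp at hlen
      | cons h2 t2 =>
          have hcl1 : c ∈ h1 :: t1 := by
            have : 0 < (h1 :: t1).count c := lt_of_le_of_lt (Nat.zero_le _) hc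
            exact List.count_pos_iff.mp this
          have hh1c : h1 ≤ c := by
            rcases List.mem_cons.mp hcl1 with h | h
            · exact le_of_eq h.symm
            · exact (List.pairwise_cons.mp hs1).1 c h
          rcases lt_trichotomy h1 h2 with hlt | heq | hgt
          · exact List.Lex.rel hlt
          · subst heq
            apply List.Lex.cons
            apply ih t2 (List.pairwise_cons.mp hs1).2 (List.pairwise_cons.mp hs2).2
              (by simpa using hlen)
            · intro b hb
              have := hlow b hb
              rw [List.count_cons, List.count_cons] at this
              omega
            · rw [List.count_cons, List.count_cons] at hc
              omega
          · exfalso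
            have hh2c : h2 < c := lt_of_lt_of_le hgt hh1c
            have hne0 : (h2 :: t2).count h2 ≠ 0 := by simp [List.count_cons]
            have heqc := hlow h2 hh2c
            have hpos : 0 < (h1 :: t1).count h2 := by omega
            have h2mem : h2 ∈ h1 :: t1 := List.count_pos_iff.mp hpos
            rcases List.mem_cons.mp h2mem with h | h
            · omega
            · exact absurd ((List.pairwise_cons.mp hs1).1 h2 h) (by omega)
/-- The set of neighbours of `v` lying in `C`. -/
def nbrsIn {V : Type*} [DecidableEq V] (G : SimpleGraph V) [DecidableRel G.Adj]
    (C : Finset V) (v : V) : Finset V :=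
  C.filter (fun w => G.Adj v w)

/-- A connected `k`-partition of `G`: a partition of the vertex set into `k` nonempty
sets, each inducing a connected subgraph. -/
def IsConnKPartition {V : Type*} [Fintype V] [DecidableEq V] (G : SimpleGraph V)
    {k : ℕ} (C : Fin k → Finset V) : Prop :=
  (∀ i, (C i).Nonempty) ∧
  (∀ i j, i ≠ j → Disjoint (C i) (C j)) ∧
  (∀ v : V, ∃ i, v ∈ C i) ∧
  (∀ i, (G.induce (↑(C i) : Set V)).Connected)

/-- The size tuple of a `k`-partition: the list of part sizes in nondecreasing order. -/
def sizeTuple {V : Type*} [DecidableEq V] {k : ℕ} (C : Fin k → Finset V) : List ℕ :=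
  (Multiset.map (fun i => (C i).card) (Finset.univ : Finset (Fin k)).val).sort (· ≤ ·)
theorem stmt_7 {V : Type*} [Fintype V] [DecidableEq V] (G : SimpleGraph V) [DecidableRel G.Adj]
    (htree : G.IsTree) {k : ℕ} (hk : 2 ≤ k) (hcard : k ≤ Fintype.card V)
    (C : Fin k → Finset V) (hC : IsConnKPartition G C)
    (v : V) (i : Fin k) (hvi : v ∈ C i) (j : Fin k) (hij : j ≠ i)
    (hunsat : (nbrsIn G (C i) v).card * (C j).card <
      (nbrsIn G (C j) v).card * ((C i).card - 1)) :
    ∃ C' : Fin k → Finset V, IsConnKPartition G C' ∧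
      List.Lex (· < ·) (sizeTuple C) (sizeTuple C') := by
  classical
  obtain ⟨hne, hdisj, hcov, hconn⟩ := hC
  set a := C i with ha
  set b := C j with hb
  have hconn_a := (connected_induce_iff_rin a).mp (hconn i)
  have hconn_b := (connected_induce_iff_rin b).mp (hconn j)
  have dba : Disjoint b a := hdisj j i hij
  have hvb : v ∉ b := fun hv => Finset.disjoint_left.mp dba hv hvi
  -- basic numeric consequences
  have hpos : 0 < (nbrsIn G b v).card * (a.card - 1) :=
    lt_of_le_of_lt (Nat.zero_le _) hunsat
  have hNb_pos : 0 < (nbrsIn G b v).card :=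
    Nat.pos_of_ne_zero (fun h => by simp [h] at hpos)
  have hacard : 2 ≤ a.card := by
    rcases Nat.lt_or_ge a.card 2 with h | h
    · have h0 : a.card - 1 = 0 := by omega
      simp [h0] at hpos
    · exact h
  -- the unique neighbour of v in b
  obtain ⟨u, hu⟩ := Finset.card_pos.mp hNb_pos
  have hub : u ∈ b := (Finset.mem_filter.mp hu).1
  have hvu : G.Adj v u := (Finset.mem_filter.mp hu).2
  have hNb_eq : nbrsIn G b v = {u} := by
    apply Finset.eq_singleton_iff_unique_mem.mpr
    refine ⟨hu, fun u' hu' => ?_⟩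
    by_contra hne'
    have hu'b : u' ∈ b := (Finset.mem_filter.mp hu').1
    have hvu' : G.Adj v u' := (Finset.mem_filter.mp hu').2
    have hune : u' ≠ u := hne'
    -- path through v
    have hp1 : (SimpleGraph.Walk.cons hvu.symm (SimpleGraph.Walk.cons hvu' .nil)).IsPath := by
      rw [SimpleGraph.Walk.cons_isPath_iff, SimpleGraph.Walk.cons_isPath_iff]
      simp only [SimpleGraph.Walk.support_cons, SimpleGraph.Walk.support_nil, List.mem_cons,
        List.mem_singleton, SimpleGraph.Walk.IsPath.nil, true_and]
      push_neg
      exact ⟨⟨fun h => hvb (h ▸ hu'b), List.not_mem_nil (a := v)⟩,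
        fun h => hvb (h ▸ hub), Ne.symm hune, List.not_mem_nil (a := u)⟩
    -- path inside b
    obtain ⟨q, hq⟩ := hconn_b.2 u hub u' hu'b
    have hq2 : ∀ z ∈ q.bypass.support, z ∈ b := fun z hz =>
      hq z (SimpleGraph.Walk.support_bypass_subset _ hz)
    have huniq := (htree.existsUnique_path u u').unique hp1 q.bypass_isPath
    have hvmem : v ∈ (SimpleGraph.Walk.cons hvu.symm
        (SimpleGraph.Walk.cons hvu' .nil)).support := by simp
    rw [huniq] at hvmem
    exact hvb (hq2 v hvmem)
  have hunsat' : (nbrsIn G a v).card * b.card < a.card - 1 := by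
    rw [hNb_eq, Finset.card_singleton, one_mul] at hunsat
    exact hunsat
  -- decomposition of a.erase v into components
  set Na := nbrsIn G a v with hNa
  set S := a.erase v with hS
  have hScard : S.card = a.card - 1 := Finset.card_erase_of_mem hvi
  have hSsub : S ⊆ a := Finset.erase_subset _ _
  set comp : V → Finset V := fun w => S.filter (fun z => RIn G S w z) with hcomp
  have hcompsub : ∀ w, comp w ⊆ S := fun w => Finset.filter_subset _ _
  have hcover : ∀ x ∈ S, ∃ w ∈ Na, ∃ q : G.Walk x w, ∀ z ∈ q.support, z ∈ S := by
    intro x hx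
    have hxa : x ∈ a := hSsub hx
    have hxv : x ≠ v := (Finset.mem_erase.mp hx).1
    obtain ⟨w, hadj, q, hq⟩ := exists_nbr_walk hxa hxv (hconn_a.2 x hxa v hvi)
    have hwS : w ∈ a.erase v := hq w q.end_mem_support
    refine ⟨w, Finset.mem_filter.mpr ⟨Finset.mem_of_mem_erase hwS, hadj⟩, q, hq⟩
  have hcover' : ∀ x ∈ S, ∃ w ∈ Na, x ∈ comp w := by
    intro x hx
    obtain ⟨w, hw, q, hq⟩ := hcover x hx
    exact ⟨w, hw, Finset.mem_filter.mpr ⟨hx, RIn.symm (G := G) (S := S) (x := x) (y := w) ⟨q, hq⟩⟩⟩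
  have hNa_ne : Na.Nonempty := by
    have hSne : S.Nonempty := Finset.card_pos.mp (by omega)
    obtain ⟨x, hx⟩ := hSne
    obtain ⟨w, hw, _⟩ := hcover' x hx
    exact ⟨w, hw⟩
  obtain ⟨w0, hw0Na, hmax⟩ := Finset.exists_max_image Na (fun w => (comp w).card) hNa_ne
  set B := comp w0 with hB
  have hBsub : B ⊆ S := hcompsub w0
  have hw0S : w0 ∈ S := by
    have h := Finset.mem_filter.mp hw0Na
    exact Finset.mem_erase.mpr ⟨Ne.symm h.2.ne, h.1⟩
  have hw0B : w0 ∈ B := Finset.mem_filter.mpr ⟨hw0S, RIn.refl hw0S⟩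
  have hSle : S.card ≤ Na.card * B.card := by
    have hsub2 : S ⊆ Na.biUnion comp := fun x hx => by
      obtain ⟨w, hw, hxw⟩ := hcover' x hx
      exact Finset.mem_biUnion.mpr ⟨w, hw, hxw⟩
    calc S.card ≤ (Na.biUnion comp).card := Finset.card_le_card hsub2
      _ ≤ ∑ w ∈ Na, (comp w).card := Finset.card_biUnion_le
      _ ≤ Na.card * B.card := by
          have := Finset.sum_le_card_nsmul Na (fun w => (comp w).card) B.card
            (fun x hx => hmax x hx)
          simpa [smul_eq_mul] using this
  have hbB : b.card < B.card := by
    have h1 : Na.card * b.card < Na.card * B.card := by omega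
    exact Nat.lt_of_mul_lt_mul_left h1
  have hBcard_le : B.card ≤ a.card - 1 := hScard ▸ Finset.card_le_card hBsub
  -- B is connected
  have hBrin : ∀ x ∈ B, RIn G S w0 x := fun x hx => (Finset.mem_filter.mp hx).2
  have hBconn : ∀ x ∈ B, ∀ y ∈ B, RIn G B x y := by
    intro x hx y hy
    obtain ⟨p, hp⟩ := (hBrin x hx).symm.trans (hBrin y hy)
    refine ⟨p, fun z hz => Finset.mem_filter.mpr ⟨hp z hz, ?_⟩⟩
    exact (hBrin x hx).trans ⟨p.takeUntil z hz, fun z' hz' =>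
      hp z' (SimpleGraph.Walk.support_takeUntil_subset _ hz hz')⟩
  -- the set T
  set T : Finset V := insert v (S \ B) with hT
  have hvT : v ∈ T := Finset.mem_insert_self _ _
  have hvS : v ∉ S := fun h => (Finset.mem_erase.mp h).1 rfl
  have hTa : T ⊆ a := by
    rw [hT]
    intro z hz
    rcases Finset.mem_insert.mp hz with rfl | hz
    · exact hvi
    · exact hSsub (Finset.mem_sdiff.mp hz).1
  have hTreach : ∀ x ∈ T, RIn G T x v := by
    intro x hx
    rcases Finset.mem_insert.mp hx with rfl | hx
    · exact RIn.refl hvT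
    · obtain ⟨hxS, hxB⟩ := Finset.mem_sdiff.mp hx
      obtain ⟨w, hwNa, q, hq⟩ := hcover x hxS
      have hqB : ∀ z ∈ q.support, z ∉ B := by
        intro z hz hzB
        apply hxB
        refine Finset.mem_filter.mpr ⟨hxS, ?_⟩
        have h1 : RIn G S w0 z := hBrin z hzB
        have h2 : RIn G S x z := ⟨q.takeUntil z hz, fun z' hz' =>
          hq z' (SimpleGraph.Walk.support_takeUntil_subset _ hz hz')⟩
        exact h1.trans h2.symm
      have hqT : ∀ z ∈ q.support, z ∈ T := fun z hz =>
        Finset.mem_insert.mpr (Or.inr (Finset.mem_sdiff.mpr ⟨hq z hz, hqB z hz⟩))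
      have hwT : w ∈ T := hqT w q.end_mem_support
      have hadj : G.Adj v w := (Finset.mem_filter.mp hwNa).2
      exact RIn.trans (G := G) (S := T) ⟨q, hqT⟩ (rin_of_adj hwT hvT hadj.symm)
  -- the new part D = b ∪ T
  set D : Finset V := b ∪ T with hD
  have hvD : v ∈ D := Finset.mem_union_right _ hvT
  have hDreach : ∀ x ∈ D, RIn G D x v := by
    intro x hx
    rcases Finset.mem_union.mp hx with hx | hx
    · have h1 : RIn G D x u := (hconn_b.2 x hx u hub).mono Finset.subset_union_left
      exact h1.trans (rin_of_adj (Finset.mem_union_left _ hub) hvD hvu.symm)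
    · exact (hTreach x hx).mono Finset.subset_union_right
  have hDconn : ∀ x ∈ D, ∀ y ∈ D, RIn G D x y := fun x hx y hy =>
    (hDreach x hx).trans (hDreach y hy).symm
  -- the new partition
  set C' : Fin k → Finset V := fun t => if t = i then B else if t = j then D else C t with hC'
  have hC'i : C' i = B := by simp [hC']
  have hC'j : C' j = D := by simp [hC', hij]
  have hC't : ∀ t, t ≠ i → t ≠ j → C' t = C t := by
    intro t h1 h2; simp [hC', h1, h2]
  -- cardinalities
  have hbT : Disjoint b T := dba.mono_right hTa
  have hDcard : D.card = b.card + (a.card - B.card) := by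
    have h1 : D.card = b.card + T.card := Finset.card_union_of_disjoint hbT
    have h2 : T.card = (S \ B).card + 1 := by
      rw [hT, Finset.card_insert_of_notMem (fun h => hvS (Finset.mem_sdiff.mp h).1)]
    have h3 : (S \ B).card = S.card - B.card := Finset.card_sdiff_of_subset hBsub
    omega
  -- partition properties
  have hBa : B ⊆ a := hBsub.trans hSsub
  have hpart : IsConnKPartition G C' := by
    refine ⟨?_, ?_, ?_, ?_⟩
    · intro t
      by_cases h1 : t = i
      · subst h1; rw [hC'i]; exact ⟨w0, hw0B⟩
      · by_cases h2 : t = j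
        · subst h2; rw [hC'j]; exact ⟨v, hvD⟩
        · rw [hC't t h1 h2]; exact hne t
    · -- disjointness
      have dBD : Disjoint B D := by
        rw [hD, Finset.disjoint_union_right]
        constructor
        · exact (dba.mono_right hBa).symm
        · rw [hT, Finset.disjoint_insert_right]
          refine ⟨fun h => hvS (hBsub h), Finset.sdiff_disjoint.symm⟩
      have dBC : ∀ t, t ≠ i → Disjoint B (C t) := fun t ht =>
        (hdisj i t (Ne.symm ht)).mono_left hBa
      have dDC : ∀ t, t ≠ i → t ≠ j → Disjoint D (C t) := by
        intro t h1 h2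
        rw [hD, Finset.disjoint_union_left]
        exact ⟨hdisj j t (Ne.symm h2), (hdisj i t (Ne.symm h1)).mono_left hTa⟩
      intro s t hst
      by_cases hsi : s = i
      · subst hsi
        rw [hC'i]
        by_cases htj : t = j
        · subst htj; rw [hC'j]; exact dBD
        · rw [hC't t (Ne.symm hst) htj]; exact dBC t (Ne.symm hst)
      · by_cases hsj : s = j
        · subst hsj
          rw [hC'j]
          by_cases hti : t = i
          · subst hti; rw [hC'i]; exact dBD.symm
          · rw [hC't t hti (Ne.symm hst)]; exact dDC t hti (Ne.symm hst)
        · rw [hC't s hsi hsj]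
          by_cases hti : t = i
          · subst hti; rw [hC'i]; exact (dBC s hsi).symm
          · by_cases htj : t = j
            · subst htj; rw [hC'j]; exact (dDC s hsi hsj).symm
            · rw [hC't t hti htj]; exact hdisj s t hst
    · -- covering
      intro x
      obtain ⟨t, hxt⟩ := hcov x
      by_cases hti : t = i
      · rw [hti, ← ha] at hxt
        by_cases hxB : x ∈ B
        · exact ⟨i, hC'i ▸ hxB⟩
        · refine ⟨j, hC'j ▸ ?_⟩
          apply Finset.mem_union_right
          by_cases hxv : x = v
          · subst hxv; exact hvT
          · exact Finset.mem_insert.mpr (Or.inr (Finset.mem_sdiff.mpr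
              ⟨Finset.mem_erase.mpr ⟨hxv, hxt⟩, hxB⟩))
      · by_cases htj : t = j
        · rw [htj, ← hb] at hxt
          exact ⟨j, hC'j ▸ Finset.mem_union_left _ hxt⟩
        · exact ⟨t, (hC't t hti htj) ▸ hxt⟩
    · -- connectivity
      intro t
      by_cases hti : t = i
      · subst hti
        rw [hC'i]
        exact (connected_induce_iff_rin B).mpr ⟨⟨w0, hw0B⟩, hBconn⟩
      · by_cases htj : t = j
        · subst htj
          rw [hC'j]
          exact (connected_induce_iff_rin D).mpr ⟨⟨v, hvD⟩, hDconn⟩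
        · rw [hC't t hti htj]
          exact hconn t
  refine ⟨C', hpart, ?_⟩
  -- lexicographic comparison of size tuples
  have hiuv : i ∈ (Finset.univ : Finset (Fin k)).val := Finset.mem_univ_val _
  have hnodup : (Finset.univ : Finset (Fin k)).val.Nodup := Finset.univ.nodup
  set m0 : Multiset (Fin k) := ((Finset.univ : Finset (Fin k)).val.erase i).erase j with hm0
  have hjmem : j ∈ (Finset.univ : Finset (Fin k)).val.erase i :=
    (Multiset.mem_erase_of_ne hij).mpr (Finset.mem_univ_val _)
  have huniv : (Finset.univ : Finset (Fin k)).val = i ::ₘ j ::ₘ m0 := by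
    rw [hm0, Multiset.cons_erase hjmem, Multiset.cons_erase hiuv]
  have him0 : i ∉ m0 := fun h =>
    hnodup.not_mem_erase (Multiset.mem_of_mem_erase h)
  have hjm0 : j ∉ m0 := (hnodup.erase i).not_mem_erase
  have hmap_eq : Multiset.map (fun t => (C' t).card) m0
      = Multiset.map (fun t => (C t).card) m0 := by
    apply Multiset.map_congr rfl
    intro t ht
    rw [hC't t (fun h => him0 (h ▸ ht)) (fun h => hjm0 (h ▸ ht))]
  have hold : Multiset.map (fun t => (C t).card) (Finset.univ : Finset (Fin k)).val
      = a.card ::ₘ b.card ::ₘ Multiset.map (fun t => (C t).card) m0 := by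
    rw [huniv]
    simp [ha, hb]
  have hnew : Multiset.map (fun t => (C' t).card) (Finset.univ : Finset (Fin k)).val
      = B.card ::ₘ D.card ::ₘ Multiset.map (fun t => (C t).card) m0 := by
    rw [huniv]
    simp only [Multiset.map_cons, hC'i, hC'j, hmap_eq]
  have hcount : ∀ (s : Multiset ℕ) (n : ℕ), (s.sort (· ≤ ·)).count n = Multiset.count n s := by
    intro s n
    rw [← Multiset.coe_count, Multiset.sort_eq]
  have hBa' : B.card < a.card := by omega
  have hDgt : b.card < D.card := by rw [hDcard]; omega
  have hDlt : D.card < a.card := by rw [hDcard]; omega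
  apply sorted_lex_of_counts b.card
  · exact Multiset.pairwise_sort _ _
  · exact Multiset.pairwise_sort _ _
  · show (Multiset.sort _ _).length = (Multiset.sort _ _).length
    rw [Multiset.length_sort, Multiset.length_sort, hold, hnew]
    simp
  · intro n hn
    show (Multiset.sort _ _).count n = (Multiset.sort _ _).count n
    rw [hcount, hcount, hold, hnew, Multiset.count_cons, Multiset.count_cons,
      Multiset.count_cons, Multiset.count_cons]
    split_ifs <;> omega
  · show (Multiset.sort _ _).count b.card < (Multiset.sort _ _).count b.card
    rw [hcount, hcount, hold, hnew, Multiset.count_cons, Multiset.count_cons,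
      Multiset.count_cons, Multiset.count_cons]
    split_ifs <;> omega
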